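/- Let p be an odd prime and r a positive integer, and let ζ = ζ_{p^r} be a primitive p^r-th root of unity. Then the set S ∪ S̄, where S = {ζ^j : 1 ≤ j ≤ p^{r-1}(p-1)/2} and S̄ = {ζ^j : p^{r-1}(p+1)/2 ≤ j ≤ p^r - 1}, is a Z-basis of the ring of integers Z[ζ] of Q(ζ). -/

import Mathlib

set_option maxHeartbeats 1000000


open NumberField

/-- Let `p` be an odd prime, `r ≥ 1` and `ζ` a primitive `p^r`-th root of unity.  Then
`{ζ^j : 1 ≤ j ≤ p^{r-1}(p-1)/2} ∪ {ζ^j : p^{r-1}(p+1)/2 ≤ j ≤ p^r - 1}` is a `ℤ`-basis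
of the ring of integers `ℤ[ζ]` of `ℚ(ζ)`. -/
theorem stmt2 (p r : ℕ) (hp : p.Prime) (hodd : Odd p) (hr : 1 ≤ r)
    (ζ : 𝓞 (CyclotomicField (p ^ r) ℚ))
    (hζ : IsPrimitiveRoot ζ (p ^ r)) :
    LinearIndependent ℤ
      (fun j : {j : ℕ // (1 ≤ j ∧ j ≤ p ^ (r - 1) * (p - 1) / 2) ∨
          (p ^ (r - 1) * (p + 1) / 2 ≤ j ∧ j ≤ p ^ r - 1)} => ζ ^ (j : ℕ)) ∧
    Submodule.span ℤ
      (Set.range (fun j : {j : ℕ // (1 ≤ j ∧ j ≤ p ^ (r - 1) * (p - 1) / 2) ∨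
          (p ^ (r - 1) * (p + 1) / 2 ≤ j ∧ j ≤ p ^ r - 1)} => ζ ^ (j : ℕ))) = ⊤ := by
  classical
  obtain ⟨m, hm⟩ := hodd
  have hp2 : 2 ≤ p := hp.two_le
  have hm1 : 1 ≤ m := by omega
  set q : ℕ := p ^ (r - 1) with hq
  have hq1 : 1 ≤ q := Nat.one_le_pow _ _ hp.pos
  have hpr : p ^ r = q * p := by
    rw [hq, ← pow_succ]
    congr 1
    omega
  set A : ℕ := q * m with hAdef
  have hA : p ^ (r - 1) * (p - 1) / 2 = A := by
    rw [← hq, show p - 1 = 2 * m by omega, show q * (2 * m) = q * m * 2 by ring,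
      Nat.mul_div_cancel _ (by norm_num), hAdef]
  have hB : p ^ (r - 1) * (p + 1) / 2 = A + q := by
    rw [← hq, show p + 1 = 2 * (m + 1) by omega, show q * (2 * (m + 1)) = (q * m + q) * 2 by ring,
      Nat.mul_div_cancel _ (by norm_num), hAdef]
  have hAq : A ≥ q := by
    calc A = q * m := hAdef
    _ ≥ q * 1 := Nat.mul_le_mul_left _ hm1
    _ = q := by ring
  have hqp2A : q * p = 2 * A + q := by rw [hAdef, hm]; ring
  have hC : p ^ r - 1 = 2 * A + q - 1 := by rw [hpr, hqp2A]
  set K := CyclotomicField (p ^ r) ℚ with hK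
  set M := Submodule.span ℤ
      (Set.range (fun j : {j : ℕ // (1 ≤ j ∧ j ≤ p ^ (r - 1) * (p - 1) / 2) ∨
          (p ^ (r - 1) * (p + 1) / 2 ≤ j ∧ j ≤ p ^ r - 1)} => ζ ^ (j : ℕ))) with hM
  -- membership of "good" exponents
  have hmem : ∀ j : ℕ, 1 ≤ j → (j ≤ A ∨ A + q ≤ j) → j ≤ 2 * A + q - 1 → ζ ^ j ∈ M := by
    intro j h1 h2 h3
    apply Submodule.subset_span
    refine ⟨⟨j, ?_⟩, rfl⟩
    rcases h2 with h | h
    · exact Or.inl ⟨h1, by rw [hA]; exact h⟩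
    · exact Or.inr ⟨by rw [hB]; exact h, by rw [hC]; exact h3⟩
  -- the basic relation among powers of ζ
  have hζq : IsPrimitiveRoot (ζ ^ q) p := hζ.pow (pow_pos hp.pos r) (by rw [hpr])
  have hgeom : ∑ i ∈ Finset.range p, (ζ ^ q) ^ i = 0 := hζq.geom_sum_eq_zero hp.one_lt
  have hrel : ∀ t : ℕ, ∑ i ∈ Finset.range p, ζ ^ (t + i * q) = 0 := by
    intro t
    have h : ∑ i ∈ Finset.range p, ζ ^ (t + i * q)
        = ζ ^ t * ∑ i ∈ Finset.range p, (ζ ^ q) ^ i := by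
      rw [Finset.mul_sum]
      refine Finset.sum_congr rfl fun i _ => ?_
      rw [← pow_mul, ← pow_add, mul_comm q i]
    rw [h, hgeom, mul_zero]
  -- every power of ζ with exponent < p^r is in M
  have key : ∀ j : ℕ, j < q * p → ζ ^ j ∈ M := by
    intro j hj
    by_cases hPj : 1 ≤ j ∧ (j ≤ A ∨ A + q ≤ j)
    · exact hmem j hPj.1 hPj.2 (by omega)
    push_neg at hPj
    have hgap : j = 0 ∨ (A < j ∧ j < A + q) := by
      rcases Nat.eq_zero_or_pos j with h | h
      · exact Or.inl h
      · exact Or.inr ⟨(hPj h).1, (hPj h).2⟩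
    set t : ℕ := j % q with ht
    set k : ℕ := j / q with hk
    have hjtk : j = t + k * q := by
      rw [ht, hk, add_comm, mul_comm]
      exact (Nat.div_add_mod j q).symm
    have htq : t < q := Nat.mod_lt _ (by omega)
    have hkp : k < p := by
      rw [hk]
      exact Nat.div_lt_of_lt_mul (by rw [mul_comm] at hj ⊢; exact hj)
    -- all the other representatives of the class of j mod q are good exponents
    have hin : ∀ i, i < p → i ≠ k → ζ ^ (t + i * q) ∈ M := by
      intro i hip hik
      have hiq2A : i * q ≤ 2 * A := by
        calc i * q ≤ (2 * m) * q := Nat.mul_le_mul_right _ (by omega)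
        _ = 2 * A := by rw [hAdef]; ring
      rcases hgap with h0 | hmid
      · -- j = 0, hence t = 0 and k = 0
        have ht0 : t = 0 := by omega
        have hk0 : k = 0 := by
          rcases Nat.eq_zero_or_pos k with h | h
          · exact h
          · exfalso
            have h2 : q ≤ k * q := Nat.le_mul_of_pos_left q h
            omega
        have hi1 : 1 ≤ i := by omega
        have hq_le : q ≤ i * q := Nat.le_mul_of_pos_left q hi1
        rcases le_or_gt i m with him | him
        · refine hmem _ (by omega) (Or.inl ?_) (by omega)
          rw [ht0, zero_add, hAdef]
          calc i * q ≤ m * q := Nat.mul_le_mul_right _ him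
          _ = q * m := by ring
        · refine hmem _ (by omega) (Or.inr ?_) (by omega)
          rw [ht0, zero_add]
          calc A + q = (m + 1) * q := by rw [hAdef]; ring
          _ ≤ i * q := Nat.mul_le_mul_right _ (by omega)
      · -- A < j < A + q, hence t ≥ 1 and k = m
        have ht1 : 1 ≤ t := by
          by_contra h
      -- if t = 0 then j = k*q is a multiple of q strictly between A = m*q and (m+1)*q
        -- impossible
          have ht0 : t = 0 := by omega
          rw [ht0, zero_add] at hjtk
          rcases le_or_gt k m with hkm | hkm
          · have : k * q ≤ m * q := Nat.mul_le_mul_right _ hkm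
            have hAmq : A = m * q := by rw [hAdef]; ring
            omega
          · have : (m + 1) * q ≤ k * q := Nat.mul_le_mul_right _ hkm
            have hAmq : A + q = (m + 1) * q := by rw [hAdef]; ring
            omega
        have hkm : k = m := by
          have hAmq : A = m * q := by rw [hAdef]; ring
          rcases lt_trichotomy k m with h | h | h
          · have : k * q + q ≤ m * q := by
              calc k * q + q = (k + 1) * q := by ring
              _ ≤ m * q := Nat.mul_le_mul_right _ (by omega)
            omega
          · exact h
          · have : m * q + q ≤ k * q := by
              calc m * q + q = (m + 1) * q := by ring
              _ ≤ k * q := Nat.mul_le_mul_right _ (by omega)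
            omega
        rcases lt_trichotomy i m with him | him | him
        · refine hmem _ (by omega) (Or.inl ?_) (by omega)
          have : i * q + q ≤ m * q := by
            calc i * q + q = (i + 1) * q := by ring
            _ ≤ m * q := Nat.mul_le_mul_right _ (by omega)
          have hAmq : A = m * q := by rw [hAdef]; ring
          omega
        · exact absurd (him.trans hkm.symm) hik
        · refine hmem _ (by omega) (Or.inr ?_) (by omega)
          have : (m + 1) * q ≤ i * q := Nat.mul_le_mul_right _ (by omega)
          have hAmq : A + q = (m + 1) * q := by rw [hAdef]; ring
          omega
    -- conclude using the relation
    have hsum := hrel t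
    rw [← Finset.sum_erase_add _ _ (Finset.mem_range.2 hkp)] at hsum
    have hjeq : ζ ^ j = -∑ i ∈ (Finset.range p).erase k, ζ ^ (t + i * q) := by
      rw [hjtk]
      exact eq_neg_of_add_eq_zero_right hsum
    rw [hjeq]
    exact Submodule.neg_mem _ (Submodule.sum_mem _ fun i hi =>
      hin i (Finset.mem_range.1 (Finset.mem_of_mem_erase hi)) (Finset.ne_of_mem_erase hi))
  have hone : ζ ^ (q * p) = 1 := by rw [← hpr]; exact hζ.pow_eq_one
  have key' : ∀ n : ℕ, ζ ^ n ∈ M := by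
    intro n
    have h1 : ζ ^ n = ζ ^ (n % (q * p)) := by
      conv_lhs => rw [← Nat.div_add_mod n (q * p)]
      rw [pow_add, pow_mul, hone, one_pow, one_mul]
    rw [h1]
    exact key _ (Nat.mod_lt _ (by positivity))
  -- the span is everything, using the integral power basis
  set P : ℕ+ := ⟨p, hp.pos⟩ with hP
  haveI hfact : Fact (P : ℕ).Prime := ⟨hp⟩
  have hPr : (P ^ r : ℕ+) = ⟨p ^ r, pow_pos hp.pos r⟩ := by
    apply PNat.coe_injective
    rw [PNat.pow_coe]; rfl
  haveI hcyc : IsCyclotomicExtension {(P : ℕ) ^ r} ℚ K := by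
    show IsCyclotomicExtension {p ^ r} ℚ K
    haveI : NeZero (p ^ r) := ⟨(pow_pos hp.pos r).ne'⟩
    haveI : NeZero ((p ^ r : ℕ) : ℚ) := ⟨Nat.cast_ne_zero.mpr (pow_pos hp.pos r).ne'⟩
    exact CyclotomicField.isCyclotomicExtension (p ^ r) ℚ
  have hcoe : ((P ^ r : ℕ+) : ℕ) = p ^ r := by rw [hPr]; rfl
  set ζK : K := algebraMap (𝓞 K) K ζ with hζK
  have hζKprim : IsPrimitiveRoot ζK ((P : ℕ) ^ r) := by
    show IsPrimitiveRoot ζK (p ^ r)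
    exact hζ.map_of_injective RingOfIntegers.coe_injective
  have hspan : M = ⊤ := by
    rw [eq_top_iff]
    set b := hζKprim.integralPowerBasisOfPrimePow with hb
    have hgen : b.gen = ζ := by
      ext
      rw [hb, hζKprim.integralPowerBasisOfPrimePow_gen]
      rfl
    rw [← b.basis.span_eq, Submodule.span_le]
    rintro x ⟨i, rfl⟩
    rw [b.basis_eq_pow, hgen]
    exact key' _
  refine ⟨?_, hspan⟩
  -- linear independence: transfer to ℚ using cardinality = finrank
  set ι := {j : ℕ // (1 ≤ j ∧ j ≤ p ^ (r - 1) * (p - 1) / 2) ∨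
      (p ^ (r - 1) * (p + 1) / 2 ≤ j ∧ j ≤ p ^ r - 1)} with hι
  set F : ι → 𝓞 K := fun j => ζ ^ (j : ℕ) with hF
  haveI : Fintype ι := Fintype.ofFinset
    ((Finset.Icc 1 (p ^ (r - 1) * (p - 1) / 2)) ∪
      (Finset.Icc (p ^ (r - 1) * (p + 1) / 2) (p ^ r - 1)))
    (by intro x; simp only [Finset.mem_union, Finset.mem_Icc]; exact Iff.rfl)
  have hdisj : Disjoint (Finset.Icc 1 (p ^ (r - 1) * (p - 1) / 2))
      (Finset.Icc (p ^ (r - 1) * (p + 1) / 2) (p ^ r - 1)) := by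
    rw [Finset.disjoint_left]
    intro a ha hb
    rw [Finset.mem_Icc] at ha hb
    rw [hA] at ha
    rw [hB] at hb
    omega
  have hcard' : Fintype.card ι = ((Finset.Icc 1 (p ^ (r - 1) * (p - 1) / 2)) ∪
      (Finset.Icc (p ^ (r - 1) * (p + 1) / 2) (p ^ r - 1))).card :=
    Fintype.card_of_subtype _
      (fun x => by simp only [Finset.mem_union, Finset.mem_Icc])
  have hcard : Fintype.card ι = 2 * A := by
    rw [hcard', Finset.card_union_of_disjoint hdisj, Nat.card_Icc, Nat.card_Icc, hA, hB, hC]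
    omega
  haveI hnf : NumberField K := IsCyclotomicExtension.numberField {(P : ℕ) ^ r} ℚ K
  have hfinrank : Module.finrank ℚ K = 2 * A := by
    rw [IsCyclotomicExtension.finrank (n := (P : ℕ) ^ r) K
      (Polynomial.cyclotomic.irreducible_rat (by positivity)), show (P : ℕ) = p from rfl,
      Nat.totient_prime_pow hp (by omega), ← hq, show p - 1 = 2 * m by omega, hAdef]
    ring
  set f : 𝓞 K →ₗ[ℤ] K := (Algebra.linearMap (𝓞 K) K).restrictScalars ℤ with hf
  set g : ι → K := fun j => ζK ^ (j : ℕ) with hg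
  have hfF : ⇑f ∘ F = g := by
    funext j
    simp only [hf, hF, hg, Function.comp_apply, LinearMap.coe_restrictScalars,
      Algebra.linearMap_apply, map_pow, hζK]
  have hQspan : ⊤ ≤ Submodule.span ℚ (Set.range g) := by
    have h1 : Set.range (algebraMap (𝓞 K) K) ⊆ (Submodule.span ℚ (Set.range g) : Set K) := by
      rintro _ ⟨y, rfl⟩
      have hy : f y ∈ Submodule.span ℤ (⇑f '' Set.range F) :=
        Submodule.image_span_subset_span f _ ⟨y, by rw [← hM, hspan]; trivial, rfl⟩
      rw [← Set.range_comp, hfF] at hy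
      exact Submodule.span_subset_span ℤ ℚ _ hy
    rw [← (integralBasis K).span_eq, Submodule.span_le]
    rintro _ ⟨i, rfl⟩
    rw [integralBasis_apply]
    exact h1 ⟨_, rfl⟩
  have hliQ : LinearIndependent ℚ g :=
    linearIndependent_of_top_le_span_of_card_eq_finrank hQspan (by rw [hcard, hfinrank])
  have hliZ : LinearIndependent ℤ g := by
    refine hliQ.restrict_scalars ?_
    intro a b h
    simpa [zsmul_eq_mul] using h
  rw [← hfF] at hliZ
  exact hliZ.of_comp f
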